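/- The group G presented by generators X₁, X₂, X₃ and relations Xᵢ³ = e (for all i) and XᵢXⱼXₖ = XₖXᵢXⱼ for all pairwise distinct i, j, k has order 81. -/

import Mathlib

open FreeGroup

/-- Relators of the group `⟨X₁,X₂,X₃ : Xᵢ³ = e, XᵢXⱼXₖ = XₖXᵢXⱼ (i,j,k pairwise distinct)⟩`. -/
def chshRels : Set (FreeGroup (Fin 3)) :=
  {r | (∃ i : Fin 3, r = (FreeGroup.of i) ^ 3) ∨
    (∃ i j k : Fin 3, i ≠ j ∧ j ≠ k ∧ i ≠ k ∧
      r = FreeGroup.of i * FreeGroup.of j * FreeGroup.of k *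
        (FreeGroup.of k * FreeGroup.of i * FreeGroup.of j)⁻¹)}


-- concrete group of order 81
structure Hgp where
  a : ZMod 3
  b : ZMod 3
  c : ZMod 3
  d : ZMod 3
  deriving DecidableEq, Fintype

namespace Hgp

instance : Mul Hgp := ⟨fun v w => ⟨v.a + w.a, v.b + w.b, v.c + w.c,
    v.d + w.d + v.c * w.a - v.b * w.a - v.c * w.b⟩⟩
instance : One Hgp := ⟨⟨0, 0, 0, 0⟩⟩
instance : Inv Hgp := ⟨fun v => ⟨-v.a, -v.b, -v.c, -v.d + v.c * v.a - v.b * v.a - v.c * v.b⟩⟩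

@[simp] lemma mul_a (v w : Hgp) : (v * w).a = v.a + w.a := rfl
@[simp] lemma mul_b (v w : Hgp) : (v * w).b = v.b + w.b := rfl
@[simp] lemma mul_c (v w : Hgp) : (v * w).c = v.c + w.c := rfl
@[simp] lemma mul_d (v w : Hgp) : (v * w).d = v.d + w.d + v.c * w.a - v.b * w.a - v.c * w.b := rfl
@[simp] lemma one_a : (1 : Hgp).a = 0 := rfl
@[simp] lemma one_b : (1 : Hgp).b = 0 := rfl
@[simp] lemma one_c : (1 : Hgp).c = 0 := rfl
@[simp] lemma one_d : (1 : Hgp).d = 0 := rfl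

lemma ext' {v w : Hgp} (ha : v.a = w.a) (hb : v.b = w.b) (hc : v.c = w.c) (hd : v.d = w.d) :
    v = w := by cases v; cases w; simp_all

instance : Group Hgp where
  mul_assoc v w x := ext' (by simp; ring) (by simp; ring) (by simp; ring) (by simp; ring)
  one_mul v := ext' (by simp) (by simp) (by simp) (by simp)
  mul_one v := ext' (by simp) (by simp) (by simp) (by simp)
  inv_mul_cancel v := ext' (by simp [Inv.inv]) (by simp [Inv.inv]) (by simp [Inv.inv])
    (by show -v.d + v.c * v.a - v.b * v.a - v.c * v.b + v.d + (-v.c) * v.a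
          - (-v.b) * v.a - (-v.c) * v.b = 0; ring)

lemma card_eq : Nat.card Hgp = 81 := by rw [Nat.card_eq_fintype_card]; rfl

end Hgp

-- generators image in Hgp
def gens : Fin 3 → Hgp := fun i =>
  match i with
  | 0 => ⟨1, 0, 0, 0⟩
  | 1 => ⟨0, 1, 0, 0⟩
  | 2 => ⟨0, 0, 1, 0⟩

lemma gens_rels : ∀ r ∈ chshRels, FreeGroup.lift gens r = 1 := by
  rintro r (⟨i, rfl⟩ | ⟨i, j, k, h1, h2, h3, rfl⟩)
  · rw [map_pow, FreeGroup.lift_apply_of]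
    revert i; decide
  · simp only [_root_.map_mul, _root_.map_inv, FreeGroup.lift_apply_of]
    revert h1 h2 h3; revert i j k; decide

abbrev G := PresentedGroup chshRels

def f : G →* Hgp := PresentedGroup.toGroup gens_rels

-- relations in G
lemma relquot {r : FreeGroup (Fin 3)} (h : r ∈ chshRels) :
    PresentedGroup.mk chshRels r = 1 :=
  (QuotientGroup.eq_one_iff _).mpr (Subgroup.subset_normalClosure h)

lemma cube (i : Fin 3) : (PresentedGroup.of i : G) ^ 3 = 1 := by
  have h := relquot (Or.inl ⟨i, rfl⟩)
  rwa [map_pow] at h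

lemma trip {i j k : Fin 3} (h1 : i ≠ j) (h2 : j ≠ k) (h3 : i ≠ k) :
    (PresentedGroup.of i : G) * PresentedGroup.of j * PresentedGroup.of k =
      PresentedGroup.of k * PresentedGroup.of i * PresentedGroup.of j := by
  have h := relquot (Or.inr ⟨i, j, k, h1, h2, h3, rfl⟩)
  simp only [_root_.map_mul, _root_.map_inv] at h
  rwa [mul_inv_eq_one] at h


section keylemmas
variable {K : Type*} [Group K]

lemma key1 {x y z : K} (hz : Commute z (y * x)) (hx : Commute x (y * z)) :
    x * y * x⁻¹ * y⁻¹ = y * z * y⁻¹ * z⁻¹ := by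
  have h1 : Commute z (x⁻¹ * y⁻¹) := by
    have := hz.inv_right
    rwa [mul_inv_rev] at this
  calc x * y * x⁻¹ * y⁻¹
      = x * y * (z * (x⁻¹ * y⁻¹) * z⁻¹) := by rw [h1.eq]; group
    _ = x * (y * z) * x⁻¹ * (y⁻¹ * z⁻¹) := by group
    _ = (y * z) * x * x⁻¹ * (y⁻¹ * z⁻¹) := by rw [hx.eq]
    _ = y * z * y⁻¹ * z⁻¹ := by group

lemma swap_pow {s t v : K} (h : s * t = t * s * v) (hvs : Commute v s) (hvt : Commute v t) :
    ∀ m n : ℕ, s ^ m * t ^ n = t ^ n * s ^ m * v ^ (m * n) := by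
  have step : ∀ n : ℕ, s * t ^ n = t ^ n * s * v ^ n := by
    intro n
    induction n with
    | zero => simp
    | succ n ih =>
      calc s * t ^ (n + 1) = (s * t ^ n) * t := by rw [pow_succ, mul_assoc]
        _ = t ^ n * s * (v ^ n * t) := by rw [ih, mul_assoc]
        _ = t ^ n * s * (t * v ^ n) := by rw [(hvt.pow_left n).eq]
        _ = t ^ n * (s * t) * v ^ n := by group
        _ = t ^ n * (t * s * v) * v ^ n := by rw [h]
        _ = t ^ (n + 1) * s * v ^ (n + 1) := by rw [pow_succ, pow_succ]; group
  intro m n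
  induction m with
  | zero => simp
  | succ m ih =>
    calc s ^ (m + 1) * t ^ n = s ^ m * (s * t ^ n) := by rw [pow_succ']; group
      _ = s ^ m * (t ^ n * s * v ^ n) := by rw [step]
      _ = (s ^ m * t ^ n) * s * v ^ n := by group
      _ = t ^ n * s ^ m * v ^ (m * n) * s * v ^ n := by rw [ih]
      _ = t ^ n * s ^ m * (v ^ (m * n) * s) * v ^ n := by group
      _ = t ^ n * s ^ m * (s * v ^ (m * n)) * v ^ n := by rw [(hvs.pow_left _).eq]
      _ = t ^ n * s ^ (m + 1) * (v ^ (m * n) * v ^ n) := by rw [pow_succ]; group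
      _ = t ^ n * s ^ (m + 1) * v ^ ((m + 1) * n) := by rw [← pow_add, Nat.succ_mul]

lemma powcong {g : K} (hg : g ^ 3 = 1) {m n : ℕ} (h : (m : ZMod 3) = (n : ZMod 3)) :
    g ^ m = g ^ n := by
  rw [pow_eq_pow_mod m hg, pow_eq_pow_mod n hg]
  congr 1
  exact (ZMod.natCast_eq_natCast_iff m n 3).mp h

end keylemmas

lemma valcast (x : ZMod 3) : ((x.val : ℕ) : ZMod 3) = x := by
  simp [ZMod.natCast_val, ZMod.cast_id]


namespace chshG

noncomputable def a : G := PresentedGroup.of 0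
noncomputable def b : G := PresentedGroup.of 1
noncomputable def c : G := PresentedGroup.of 2
noncomputable def u : G := a * b * a⁻¹ * b⁻¹

lemma commOf {i j k : Fin 3} (h1 : i ≠ j) (h2 : j ≠ k) (h3 : i ≠ k) :
    Commute (PresentedGroup.of k : G) (PresentedGroup.of i * PresentedGroup.of j) := by
  have h := trip h1 h2 h3
  show _ * _ = _ * _
  rw [← mul_assoc, ← h]

lemma Rc_ab : Commute c (a * b) := commOf (by decide) (by decide) (by decide)
lemma Rc_ba : Commute c (b * a) := commOf (by decide) (by decide) (by decide)
lemma Ra_bc : Commute a (b * c) := commOf (by decide) (by decide) (by decide)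
lemma Ra_cb : Commute a (c * b) := commOf (by decide) (by decide) (by decide)
lemma Rb_ac : Commute b (a * c) := commOf (by decide) (by decide) (by decide)
lemma Rb_ca : Commute b (c * a) := commOf (by decide) (by decide) (by decide)

lemma hu_bc : u = b * c * b⁻¹ * c⁻¹ := key1 Rc_ba Ra_bc
lemma hu_ca : u = c * a * c⁻¹ * a⁻¹ := hu_bc.trans (key1 Ra_cb Rb_ca)

lemma hcu : Commute c u := by
  have hrw : u = (a * b) * (b * a)⁻¹ := by rw [u]; group
  rw [hrw]; exact Rc_ab.mul_right Rc_ba.inv_right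
lemma hau : Commute a u := by
  have hrw : u = (b * c) * (c * b)⁻¹ := by rw [hu_bc]; group
  rw [hrw]; exact Ra_bc.mul_right Ra_cb.inv_right
lemma hbu : Commute b u := by
  have hrw : u = (c * a) * (a * c)⁻¹ := by rw [hu_ca]; group
  rw [hrw]; exact Rb_ca.mul_right Rb_ac.inv_right

lemma hu_ba : Commute u (b * a) := (hbu.symm.mul_right hau.symm)
lemma hu_cb : Commute u (c * b) := (hcu.symm.mul_right hbu.symm)
lemma hu_ac : Commute u (a * c) := (hau.symm.mul_right hcu.symm)

lemma hab : a * b = b * a * u := by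
  rw [← hu_ba.eq]; simp only [u]; group
lemma hbc : b * c = c * b * u := by
  rw [← hu_cb.eq, hu_bc]; group
lemma hca : c * a = a * c * u := by
  rw [← hu_ac.eq, hu_ca]; group

lemma ha3 : a ^ 3 = 1 := cube 0
lemma hb3 : b ^ 3 = 1 := cube 1
lemma hc3 : c ^ 3 = 1 := cube 2

lemma hu3 : u ^ 3 = 1 := by
  have h := swap_pow hab hau.symm hbu.symm 3 1
  rw [ha3] at h
  simp only [one_mul, mul_one, pow_one, Nat.mul_one] at h
  exact (mul_eq_left.mp h.symm)

lemma hu2 : u ^ 2 = u⁻¹ := by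
  apply eq_inv_of_mul_eq_one_left
  rw [← pow_succ]
  exact hu3

lemma hba : b * a = a * b * u ^ 2 := by
  rw [hu2, hab]
  group
lemma hcb : c * b = b * c * u ^ 2 := by
  rw [hu2, hbc]
  group

-- collected swap lemmas at powers
lemma rca : ∀ m n : ℕ, c ^ m * a ^ n = a ^ n * c ^ m * u ^ (m * n) :=
  swap_pow hca hcu.symm hau.symm
lemma rba : ∀ m n : ℕ, b ^ m * a ^ n = a ^ n * b ^ m * u ^ (2 * (m * n)) := by
  intro m n
  have := swap_pow hba (hbu.symm.pow_left 2) (hau.symm.pow_left 2) m n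
  rwa [← pow_mul', Nat.mul_comm (m*n) 2] at this
lemma rcb : ∀ m n : ℕ, c ^ m * b ^ n = b ^ n * c ^ m * u ^ (2 * (m * n)) := by
  intro m n
  have := swap_pow hcb (hcu.symm.pow_left 2) (hbu.symm.pow_left 2) m n
  rwa [← pow_mul', Nat.mul_comm (m*n) 2] at this


lemma ru_a : ∀ (m n : ℕ) (t : G), u ^ m * (a ^ n * t) = a ^ n * (u ^ m * t) := by
  intro m n t; rw [← mul_assoc, ((hau.symm).pow_pow m n).eq, mul_assoc]
lemma ru_b : ∀ (m n : ℕ) (t : G), u ^ m * (b ^ n * t) = b ^ n * (u ^ m * t) := by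
  intro m n t; rw [← mul_assoc, ((hbu.symm).pow_pow m n).eq, mul_assoc]
lemma ru_c : ∀ (m n : ℕ) (t : G), u ^ m * (c ^ n * t) = c ^ n * (u ^ m * t) := by
  intro m n t; rw [← mul_assoc, ((hcu.symm).pow_pow m n).eq, mul_assoc]
lemma rca_t : ∀ (m n : ℕ) (t : G), c ^ m * (a ^ n * t) = a ^ n * (c ^ m * (u ^ (m * n) * t)) := by
  intro m n t; rw [← mul_assoc, rca, mul_assoc, mul_assoc]
lemma rba_t : ∀ (m n : ℕ) (t : G),
    b ^ m * (a ^ n * t) = a ^ n * (b ^ m * (u ^ (2 * (m * n)) * t)) := by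
  intro m n t; rw [← mul_assoc, rba, mul_assoc, mul_assoc]
lemma rcb_t : ∀ (m n : ℕ) (t : G),
    c ^ m * (b ^ n * t) = b ^ n * (c ^ m * (u ^ (2 * (m * n)) * t)) := by
  intro m n t; rw [← mul_assoc, rcb, mul_assoc, mul_assoc]
lemma pa_t : ∀ (m n : ℕ) (t : G), a ^ m * (a ^ n * t) = a ^ (m + n) * t := by
  intro m n t; rw [← mul_assoc, ← pow_add]
lemma pb_t : ∀ (m n : ℕ) (t : G), b ^ m * (b ^ n * t) = b ^ (m + n) * t := by
  intro m n t; rw [← mul_assoc, ← pow_add]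
lemma pc_t : ∀ (m n : ℕ) (t : G), c ^ m * (c ^ n * t) = c ^ (m + n) * t := by
  intro m n t; rw [← mul_assoc, ← pow_add]

noncomputable def F (v : Hgp) : G :=
  a ^ v.a.val * (b ^ v.b.val * (c ^ v.c.val * u ^ v.d.val))

lemma Fmul (v w : Hgp) : F (v * w) = F v * F w := by
  obtain ⟨va, vb, vc, vd⟩ := v
  obtain ⟨wa, wb, wc, wd⟩ := w
  simp only [F, Hgp.mul_a, Hgp.mul_b, Hgp.mul_c, Hgp.mul_d, mul_assoc,
    ru_a, ru_b, ru_c, rca_t, rba_t, rcb_t, pa_t, pb_t, pc_t, ← pow_add]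
  have h23 : (2 : ZMod 3) = -1 := by decide
  have h1 : (((va + wa).val : ℕ) : ZMod 3) = ((va.val + wa.val : ℕ) : ZMod 3) := by
    push_cast [valcast]; ring
  have h2 : (((vb + wb).val : ℕ) : ZMod 3) = ((vb.val + wb.val : ℕ) : ZMod 3) := by
    push_cast [valcast]; ring
  have h3 : (((vc + wc).val : ℕ) : ZMod 3) = ((vc.val + wc.val : ℕ) : ZMod 3) := by
    push_cast [valcast]; ring
  have h4 : (((vd + wd + vc * wa - vb * wa - vc * wb).val : ℕ) : ZMod 3) =
      ((2 * (vb.val * wa.val) + (2 * (vc.val * wb.val) +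
        (vc.val * wa.val + (vd.val + wd.val))) : ℕ) : ZMod 3) := by
    push_cast [valcast]
    rw [h23]; ring
  rw [powcong ha3 h1, powcong hb3 h2, powcong hc3 h3, powcong hu3 h4]

lemma F_one : F 1 = 1 := by
  simp [F, show ((0 : ZMod 3)).val = 0 from rfl]

noncomputable def psi : Hgp →* G := MonoidHom.mk' F Fmul

lemma Fof0 : F ⟨1, 0, 0, 0⟩ = a := by
  simp [F, show ((1 : ZMod 3)).val = 1 from rfl, show ((0 : ZMod 3)).val = 0 from rfl]
lemma Fof1 : F ⟨0, 1, 0, 0⟩ = b := by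
  simp [F, show ((1 : ZMod 3)).val = 1 from rfl, show ((0 : ZMod 3)).val = 0 from rfl]
lemma Fof2 : F ⟨0, 0, 1, 0⟩ = c := by
  simp [F, show ((1 : ZMod 3)).val = 1 from rfl, show ((0 : ZMod 3)).val = 0 from rfl]

lemma of_mem_range (i : Fin 3) : (PresentedGroup.of i : G) ∈ psi.range := by
  match i with
  | 0 => exact ⟨⟨1, 0, 0, 0⟩, Fof0⟩
  | 1 => exact ⟨⟨0, 1, 0, 0⟩, Fof1⟩
  | 2 => exact ⟨⟨0, 0, 1, 0⟩, Fof2⟩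

lemma psi_surj : Function.Surjective psi := by
  intro g
  have key : ∀ w : FreeGroup (Fin 3), PresentedGroup.mk chshRels w ∈ psi.range := by
    intro w
    refine FreeGroup.induction_on w ?_ ?_ ?_ ?_
    · rw [_root_.map_one]; exact one_mem _
    · intro i; exact of_mem_range i
    · intro i h; rw [_root_.map_inv]; exact inv_mem h
    · intro x y hx hy; rw [_root_.map_mul]; exact mul_mem hx hy
  obtain ⟨w, rfl⟩ := PresentedGroup.mk_surjective chshRels g
  exact key w

lemma hfa : f a = gens 0 := PresentedGroup.toGroup.of gens_rels
lemma hfb : f b = gens 1 := PresentedGroup.toGroup.of gens_rels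
lemma hfc : f c = gens 2 := PresentedGroup.toGroup.of gens_rels

lemma f_psi (v : Hgp) : f (psi v) = v := by
  show f (F v) = v
  simp only [F, u, _root_.map_mul, _root_.map_pow, _root_.map_inv, hfa, hfb, hfc]
  revert v; decide

end chshG

/-- The group `⟨X₁,X₂,X₃ : Xᵢ³ = e, XᵢXⱼXₖ = XₖXᵢXⱼ for pairwise distinct i,j,k⟩`
has order 81. -/
theorem chsh_group_order : Nat.card (PresentedGroup chshRels) = 81 := by
  have hbij : Function.Bijective f := by
    constructor
    · intro g1 g2 h
      obtain ⟨v1, rfl⟩ := chshG.psi_surj g1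
      obtain ⟨v2, rfl⟩ := chshG.psi_surj g2
      rw [chshG.f_psi, chshG.f_psi] at h
      rw [h]
    · intro v
      exact ⟨chshG.psi v, chshG.f_psi v⟩
  have : Nat.card G = Nat.card Hgp := Nat.card_eq_of_bijective f hbij
  rw [this, Hgp.card_eq]
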